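/- The reduction axiom for distributed knowledge under communication pattern update is valid: M,w ⊨ [𝐑,R]D_B φ if and only if M,w ⊨ ⋀_{R' ∈ 𝐑, R'B ≡ RB} D_{RB} [𝐑,R']φ, for all epistemic models M, worlds w, communication patterns 𝐑, R ∈ 𝐑, nonempty B ⊆ A, and formulas φ. -/
import Mathlib


namespace Stmt18

/-- An epistemic model. -/
structure EM (A P : Type) where
  W : Type
  sim : A → W → W → Prop
  L : W → Set P

/-- The language of distributed knowledge with communication pattern modalities. -/
inductive Form (A P : Type) : Type
  | atom : P → Form A P
  | neg : Form A P → Form A P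
  | conj : Form A P → Form A P → Form A P
  | dk : Set A → Form A P → Form A P
  | cpat : (CG : Set (A → A → Prop)) → (R : A → A → Prop) → R ∈ CG →
      Form A P → Form A P

/-- The update `M ⊙ 𝐑`. -/
def update {A P : Type} (M : EM A P) (CG : Set (A → A → Prop)) : EM A P where
  W := M.W × {R // R ∈ CG}
  sim a x y := ({b | x.2.1 b a} = {b | y.2.1 b a}) ∧ ∀ b, x.2.1 b a → M.sim b x.1 y.1
  L x := M.L x.1

/-- Satisfaction: `M,w ⊨ [𝐑,R]φ` iff `M ⊙ 𝐑,(w,R) ⊨ φ`. -/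
def Sat {A P : Type} : Form A P → (M : EM A P) → M.W → Prop
  | .atom p, M, w => p ∈ M.L w
  | .neg f, M, w => ¬ Sat f M w
  | .conj f g, M, w => Sat f M w ∧ Sat g M w
  | .dk B f, M, w => ∀ v, (∀ a ∈ B, M.sim a w v) → Sat f M v
  | .cpat CG R h f, M, w => Sat f (update M CG) (w, ⟨R, h⟩)

/-- The reduction axiom for distributed knowledge under communication pattern
update is valid: `M,w ⊨ [𝐑,R]D_B φ` iff `M,w ⊨ ⋀_{R'∈𝐑, R'B ≡ RB} D_{RB}[𝐑,R']φ`,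
where `R'B ≡ RB` means `R'a = Ra` for all `a ∈ B`, and `RB = ⋃_{b∈B} Rb`. -/
theorem reduction_axiom_dk (A P : Type) (M : EM A P)
    (hsim : ∀ a, Equivalence (M.sim a)) (w : M.W)
    (CG : Set (A → A → Prop)) (hrefl : ∀ R ∈ CG, ∀ b, R b b)
    (R : A → A → Prop) (hR : R ∈ CG) (B : Set A) (hB : B.Nonempty)
    (f : Form A P) :
    Sat (.cpat CG R hR (.dk B f)) M w ↔
      ∀ (R' : A → A → Prop) (h' : R' ∈ CG),
        (∀ a ∈ B, ∀ b, R' b a ↔ R b a) →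
        Sat (.dk {c | ∃ b ∈ B, R c b} (.cpat CG R' h' f)) M w := by
  simp only [Sat]
  constructor
  · intro h R' h' hag v hv
    apply h (v, ⟨R', h'⟩)
    intro a ha
    refine ⟨?_, ?_⟩
    · ext b; simp only [Set.mem_setOf_eq]; exact (hag a ha b).symm
    · intro b hb
      exact hv b ⟨a, ha, hb⟩
  · intro h v hv
    obtain ⟨v1, R', h'⟩ := v
    have hag : ∀ a ∈ B, ∀ b, R' b a ↔ R b a := by
      intro a ha b
      have := (hv a ha).1
      constructor
      · intro hb; exact (Set.ext_iff.mp this b).mpr hb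
      · intro hb; exact (Set.ext_iff.mp this b).mp hb
    exact h R' h' hag v1 (fun c ⟨b, hb, hRcb⟩ => (hv b hb).2 c hRcb)

end Stmt18
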